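/- Local mass conservation of the full-rank macro–micro scheme: if the scalar-flux equations and temperature equations of the scheme hold at every cell center and every cell corner (with periodic index arithmetic), then the total discrete mass m^m := Δx·Δy · Σ_{(i,j)} [ (2π/c)(φC^m(i,j) + φK^m(i,j)) + c_ν (TC^m(i,j) + TK^m(i,j)) ] is conserved, i.e. m^{n+1} = m^n. -/
import Mathlib


open Finset Real


private lemma mass_aux (c Δt cν σ ε h1 h0 B1 B0 T1 T0 F : ℝ)
    (hc : c ≠ 0) (hΔt : Δt ≠ 0)
    (e1 : ε ^ 2 / (c * Δt) * (h1 - h0) + 1 / (c * Δt) * (B1 - B0)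
        + (1 / (2 * Real.pi)) * F = -σ * h1)
    (e2 : cν / Δt * (T1 - T0) = 2 * Real.pi * σ * h1) :
    (2 * Real.pi / c) * ((B1 + ε ^ 2 * h1) - (B0 + ε ^ 2 * h0)) + cν * (T1 - T0)
      = -Δt * F := by
  have hπ : (Real.pi : ℝ) ≠ 0 := Real.pi_ne_zero
  field_simp at e1 e2 ⊢
  linear_combination e1 + c * e2

/-- Local mass conservation of the full-rank macro–micro scheme on a periodic grid:
if the scalar-flux equations and temperature equations of the scheme hold at every
cell center and every cell corner, then the total discrete mass
`m^m = Δx Δy Σ_{(i,j)} [(2π/c)(φC^m + φK^m) + c_ν(TC^m + TK^m)]` is conserved. -/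
theorem full_rank_macro_micro_mass_conservation
    (Nx Ny Nq : ℕ) [NeZero Nx] [NeZero Ny]
    (Δx Δy Δt ε c a cν : ℝ)
    (hΔx : 0 < Δx) (hΔy : 0 < Δy) (hΔt : 0 < Δt)
    (hε : 0 < ε) (hc : 0 < c) (ha : 0 < a) (hcν : 0 < cν)
    (w Ωx Ωy : Fin Nq → ℝ) (hw : ∀ ℓ, 0 ≤ w ℓ)
    -- unknowns at time levels n (suffix 0) and n+1 (suffix 1)
    (gX0 gX1 gY0 gY1 : ZMod Nx × ZMod Ny → Fin Nq → ℝ)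
    (hC0 hC1 TC0 TC1 hK0 hK1 TK0 TK1 : ZMod Nx × ZMod Ny → ℝ)
    (σaC σaK : ZMod Nx × ZMod Ny → ℝ)
    (hσaC : ∀ p, 0 ≤ σaC p) (hσaK : ∀ p, 0 ≤ σaK p)
    -- scalar-flux equation at every cell center
    (hfluxC : ∀ i : ZMod Nx, ∀ j : ZMod Ny,
      ε ^ 2 / (c * Δt) * (hC1 (i, j) - hC0 (i, j))
        + 1 / (c * Δt) *
            (a * c / (2 * π) * (TC1 (i, j)) ^ 4 - a * c / (2 * π) * (TC0 (i, j)) ^ 4)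
        + (1 / (2 * π)) * ∑ ℓ : Fin Nq, w ℓ *
            (Ωx ℓ * ((gX1 (i, j) ℓ - gX1 (i - 1, j) ℓ) / Δx)
              + Ωy ℓ * ((gY1 (i, j) ℓ - gY1 (i, j - 1) ℓ) / Δy))
      = -(σaC (i, j)) * hC1 (i, j))
    -- scalar-flux equation at every cell corner
    (hfluxK : ∀ i : ZMod Nx, ∀ j : ZMod Ny,
      ε ^ 2 / (c * Δt) * (hK1 (i, j) - hK0 (i, j))
        + 1 / (c * Δt) *
            (a * c / (2 * π) * (TK1 (i, j)) ^ 4 - a * c / (2 * π) * (TK0 (i, j)) ^ 4)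
        + (1 / (2 * π)) * ∑ ℓ : Fin Nq, w ℓ *
            (Ωx ℓ * ((gY1 (i + 1, j) ℓ - gY1 (i, j) ℓ) / Δx)
              + Ωy ℓ * ((gX1 (i, j + 1) ℓ - gX1 (i, j) ℓ) / Δy))
      = -(σaK (i, j)) * hK1 (i, j))
    -- temperature equations at every center and corner
    (hTempC : ∀ i : ZMod Nx, ∀ j : ZMod Ny,
      cν / Δt * (TC1 (i, j) - TC0 (i, j)) = 2 * π * σaC (i, j) * hC1 (i, j))
    (hTempK : ∀ i : ZMod Nx, ∀ j : ZMod Ny,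
      cν / Δt * (TK1 (i, j) - TK0 (i, j)) = 2 * π * σaK (i, j) * hK1 (i, j)) :
    Δx * Δy * ∑ p : ZMod Nx × ZMod Ny,
        ((2 * π / c) * ((a * c / (2 * π) * (TC1 p) ^ 4 + ε ^ 2 * hC1 p)
            + (a * c / (2 * π) * (TK1 p) ^ 4 + ε ^ 2 * hK1 p))
          + cν * (TC1 p + TK1 p))
    = Δx * Δy * ∑ p : ZMod Nx × ZMod Ny,
        ((2 * π / c) * ((a * c / (2 * π) * (TC0 p) ^ 4 + ε ^ 2 * hC0 p)
            + (a * c / (2 * π) * (TK0 p) ^ 4 + ε ^ 2 * hK0 p))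
          + cν * (TC0 p + TK0 p)) := by
  classical
  have hc' : c ≠ 0 := hc.ne'
  have hΔt' : Δt ≠ 0 := hΔt.ne'
  have hπ : (π : ℝ) ≠ 0 := Real.pi_ne_zero
  -- shift lemmas on the periodic grid
  have shiftX : ∀ (g : ZMod Nx × ZMod Ny → ℝ) (k : ZMod Nx),
      ∑ p : ZMod Nx × ZMod Ny, g (p.1 + k, p.2) = ∑ p : ZMod Nx × ZMod Ny, g p := by
    intro g k
    exact Fintype.sum_equiv ((Equiv.addRight k).prodCongr (Equiv.refl _))
      (fun p => g (p.1 + k, p.2)) g (fun p => rfl)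
  have shiftY : ∀ (g : ZMod Nx × ZMod Ny → ℝ) (k : ZMod Ny),
      ∑ p : ZMod Nx × ZMod Ny, g (p.1, p.2 + k) = ∑ p : ZMod Nx × ZMod Ny, g p := by
    intro g k
    exact Fintype.sum_equiv ((Equiv.refl _).prodCongr (Equiv.addRight k))
      (fun p => g (p.1, p.2 + k)) g (fun p => rfl)
  -- building blocks of the flux sums
  set u : ZMod Nx × ZMod Ny → ℝ := fun p => ∑ ℓ : Fin Nq, w ℓ * Ωx ℓ * gX1 p ℓ / Δx with hu
  set v : ZMod Nx × ZMod Ny → ℝ := fun p => ∑ ℓ : Fin Nq, w ℓ * Ωy ℓ * gY1 p ℓ / Δy with hv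
  set u' : ZMod Nx × ZMod Ny → ℝ := fun p => ∑ ℓ : Fin Nq, w ℓ * Ωx ℓ * gY1 p ℓ / Δx with hu'
  set v' : ZMod Nx × ZMod Ny → ℝ := fun p => ∑ ℓ : Fin Nq, w ℓ * Ωy ℓ * gX1 p ℓ / Δy with hv'
  -- per-point identity combining the four equations
  have hpt : ∀ p : ZMod Nx × ZMod Ny,
      ((2 * π / c) * ((a * c / (2 * π) * (TC1 p) ^ 4 + ε ^ 2 * hC1 p)
            + (a * c / (2 * π) * (TK1 p) ^ 4 + ε ^ 2 * hK1 p))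
          + cν * (TC1 p + TK1 p))
      - ((2 * π / c) * ((a * c / (2 * π) * (TC0 p) ^ 4 + ε ^ 2 * hC0 p)
            + (a * c / (2 * π) * (TK0 p) ^ 4 + ε ^ 2 * hK0 p))
          + cν * (TC0 p + TK0 p))
      = -Δt * ((u p - u (p.1 - 1, p.2) + (v p - v (p.1, p.2 - 1)))
          + (u' (p.1 + 1, p.2) - u' p + (v' (p.1, p.2 + 1) - v' p))) := by
    rintro ⟨i, j⟩
    have h1 := hfluxC i j
    have h2 := hfluxK i j
    have h3 := hTempC i j
    have h4 := hTempK i j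
    have e1 : ∑ ℓ : Fin Nq, w ℓ *
        (Ωx ℓ * ((gX1 (i, j) ℓ - gX1 (i - 1, j) ℓ) / Δx)
          + Ωy ℓ * ((gY1 (i, j) ℓ - gY1 (i, j - 1) ℓ) / Δy))
        = (u (i, j) - u (i - 1, j)) + (v (i, j) - v (i, j - 1)) := by
      simp only [hu, hv, ← Finset.sum_sub_distrib, ← Finset.sum_add_distrib]
      exact Finset.sum_congr rfl fun ℓ _ => by ring
    have e2 : ∑ ℓ : Fin Nq, w ℓ *
        (Ωx ℓ * ((gY1 (i + 1, j) ℓ - gY1 (i, j) ℓ) / Δx)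
          + Ωy ℓ * ((gX1 (i, j + 1) ℓ - gX1 (i, j) ℓ) / Δy))
        = (u' (i + 1, j) - u' (i, j)) + (v' (i, j + 1) - v' (i, j)) := by
      simp only [hu', hv', ← Finset.sum_sub_distrib, ← Finset.sum_add_distrib]
      exact Finset.sum_congr rfl fun ℓ _ => by ring
    rw [e1] at h1
    rw [e2] at h2
    have k1 := mass_aux c Δt cν (σaC (i, j)) ε (hC1 (i, j)) (hC0 (i, j))
      (a * c / (2 * π) * (TC1 (i, j)) ^ 4) (a * c / (2 * π) * (TC0 (i, j)) ^ 4)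
      (TC1 (i, j)) (TC0 (i, j)) _ hc' hΔt' h1 h3
    have k2 := mass_aux c Δt cν (σaK (i, j)) ε (hK1 (i, j)) (hK0 (i, j))
      (a * c / (2 * π) * (TK1 (i, j)) ^ 4) (a * c / (2 * π) * (TK0 (i, j)) ^ 4)
      (TK1 (i, j)) (TK0 (i, j)) _ hc' hΔt' h2 h4
    linarith [k1, k2]
  -- sum the per-point identities and telescope
  rw [← sub_eq_zero, ← mul_sub, ← Finset.sum_sub_distrib]
  rw [Finset.sum_congr rfl fun p _ => hpt p]
  have tele : ∑ p : ZMod Nx × ZMod Ny,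
      ((u p - u (p.1 - 1, p.2) + (v p - v (p.1, p.2 - 1)))
        + (u' (p.1 + 1, p.2) - u' p + (v' (p.1, p.2 + 1) - v' p))) = 0 := by
    simp only [sub_eq_add_neg, Finset.sum_add_distrib, Finset.sum_neg_distrib]
    rw [shiftX (fun p => u p) (-1), shiftY (fun p => v p) (-1),
        shiftX (fun p => u' p) 1, shiftY (fun p => v' p) 1]
    ring
  simp only [← Finset.mul_sum, tele]
  ring
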